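/- Let P and P̄ be as above, and let k ≥ 1. If F ∈ L²(π) is an eigenfunction of (P*)^k P^k with eigenvalue λ, then the function f(u,y) := F(u) is an eigenfunction of (P̄*)^k P̄^k with the same eigenvalue λ. -/

import Mathlib

open MeasureTheory

/-- Composition of two transition kernels. -/
noncomputable def kcomp {α : Type*} [MeasurableSpace α]
    (κ η : α → Measure α) : α → Measure α :=
  fun u => (κ u).bind η

/-- `k`-th power of a transition kernel. -/
noncomputable def kpow {α : Type*} [MeasurableSpace α]
    (κ : α → Measure α) : ℕ → α → Measure α
  | 0 => fun u => Measure.dirac u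
  | k + 1 => kcomp κ (kpow κ k)

section Aux

variable {α β γ : Type*} [MeasurableSpace α] [MeasurableSpace β] [MeasurableSpace γ]

lemma myMap_bind (μ : Measure α) {f : α → Measure β} {g : β → γ}
    (hf : Measurable f) (hg : Measurable g) :
    (μ.bind f).map g = μ.bind (fun a => (f a).map g) := by
  have hm : Measurable (fun a => (f a).map g) := (Measure.measurable_map g hg).comp hf
  ext s hs
  rw [Measure.map_apply hg hs, Measure.bind_apply (hg hs) hf.aemeasurable, Measure.bind_apply hs hm.aemeasurable]
  congr 1
  ext a
  rw [Measure.map_apply hg hs]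

lemma myBind_map (μ : Measure α) {g : α → β} {f : β → Measure γ}
    (hg : Measurable g) (hf : Measurable f) :
    (μ.map g).bind f = μ.bind (f ∘ g) := by
  ext s hs
  have hm : Measurable (fun b => f b s) := (Measure.measurable_coe hs).comp hf
  rw [Measure.bind_apply hs hf.aemeasurable, MeasureTheory.lintegral_map hm hg,
    Measure.bind_apply hs (hf.comp hg).aemeasurable]
  rfl

lemma bind_isProb {μ : Measure α} [IsProbabilityMeasure μ] {f : α → Measure β}
    (hf : Measurable f) (hfp : ∀ a, IsProbabilityMeasure (f a)) :
    IsProbabilityMeasure (μ.bind f) := by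
  constructor
  rw [Measure.bind_apply MeasurableSet.univ hf.aemeasurable]
  simp [fun a => (hfp a).measure_univ]

end Aux

section Lift

variable {U Y : Type*} [MeasurableSpace U] [MeasurableSpace Y]

lemma measurable_pairQ {Q : U → Measure Y} (hQm : Measurable Q)
    (hQ : ∀ u, IsProbabilityMeasure (Q u)) :
    Measurable (fun u' : U => (Q u').map (fun y' => (u', y'))) := by
  apply Measure.measurable_of_measurable_coe
  intro s hs
  have : (fun u' : U => ((Q u').map (fun y' => (u', y'))) s)
      = fun u' => Q u' (Prod.mk u' ⁻¹' s) := by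
    ext u'
    rw [Measure.map_apply measurable_prodMk_left hs]
  rw [this]
  let κQ : ProbabilityTheory.Kernel U Y := ⟨Q, hQm⟩
  have : ProbabilityTheory.IsMarkovKernel κQ := ⟨hQ⟩
  exact ProbabilityTheory.Kernel.measurable_kernel_prodMk_left (κ := κQ) hs

lemma measurable_kpow {κ : U → Measure U} (hκ : Measurable κ) (k : ℕ) :
    Measurable (kpow κ k) := by
  induction k with
  | zero => exact Measure.measurable_dirac
  | succ k ih => exact (Measure.measurable_bind' ih).comp hκ

lemma kpow_isProb {κ : U → Measure U} (hκ : Measurable κ)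
    (hκp : ∀ u, IsProbabilityMeasure (κ u)) (k : ℕ) (u : U) :
    IsProbabilityMeasure (kpow κ k u) := by
  induction k generalizing u with
  | zero => exact Measure.dirac.isProbabilityMeasure
  | succ k ih =>
    have := hκp u
    exact bind_isProb (measurable_kpow hκ k) (fun a => ih a)

/-- Key lemma: first marginal of the `k`-th power of the lifted kernel. -/
lemma kpow_lift_map_fst {κ : U → Measure U} {Q : U → Measure Y}
    (hκ : Measurable κ) (hκp : ∀ u, IsProbabilityMeasure (κ u))
    (hQm : Measurable Q) (hQ : ∀ u, IsProbabilityMeasure (Q u))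
    (k : ℕ) (u : U) (y : Y) :
    (kpow (fun p : U × Y => (κ p.1).bind (fun u' => (Q u').map (fun y' => (u', y')))) k
      (u, y)).map Prod.fst = kpow κ k u := by
  set lift : U × Y → Measure (U × Y) :=
    fun p => (κ p.1).bind (fun u' => (Q u').map (fun y' => (u', y'))) with hlift
  have hpair := measurable_pairQ hQm hQ
  have hliftm : Measurable lift := (Measure.measurable_bind' hpair).comp (hκ.comp measurable_fst)
  induction k generalizing u y with
  | zero => simp [kpow, Measure.map_dirac' measurable_fst]
  | succ k ih =>
    have hg : Measurable (fun p : U × Y => kpow κ k p.1) :=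
      (measurable_kpow hκ k).comp measurable_fst
    show ((lift (u, y)).bind (kpow lift k)).map Prod.fst = (κ u).bind (kpow κ k)
    rw [myMap_bind _ (measurable_kpow hliftm k) measurable_fst]
    have h1 : (fun p : U × Y => (kpow lift k p).map Prod.fst)
        = fun p => kpow κ k p.1 := by
      funext p
      obtain ⟨a, b⟩ := p
      exact ih a b
    rw [h1]
    show ((κ u).bind (fun u' => (Q u').map (fun y' => (u', y')))).bind
        (fun p : U × Y => kpow κ k p.1) = _
    rw [Measure.bind_bind hpair.aemeasurable hg.aemeasurable]
    congr 1
    funext u'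
    rw [myBind_map _ measurable_prodMk_left hg]
    have : ((fun p : U × Y => kpow κ k p.1) ∘ fun y' => (u', y'))
        = fun _ : Y => kpow κ k u' := rfl
    rw [this, Measure.bind_const, (hQ u').measure_univ, one_smul]

end Lift

theorem lift_eigenfunction_to_product
    {U Y : Type*} [MeasurableSpace U] [MeasurableSpace Y]
    (P Pstar : U → Measure U) (Q : U → Measure Y) (π : Measure U)
    [IsProbabilityMeasure π]
    (hP : ∀ u, IsProbabilityMeasure (P u))
    (hPstar : ∀ u, IsProbabilityMeasure (Pstar u))
    (hQ : ∀ u, IsProbabilityMeasure (Q u))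
    (hPm : Measurable P) (hPstarm : Measurable Pstar) (hQm : Measurable Q)
    (hstat : π.bind P = π)
    (Pbar Pbarstar : U × Y → Measure (U × Y))
    (hPbar : Pbar = fun p => (P p.1).bind (fun u' => (Q u').map (fun y' => (u', y'))))
    (hPbarstar : Pbarstar =
      fun p => (Pstar p.1).bind (fun u' => (Q u').map (fun y' => (u', y'))))
    (k : ℕ) (hk : 1 ≤ k) (lam : ℝ)
    (F : U → ℝ) (hFm : Measurable F)
    (hFL2 : MemLp F 2 π)
    (heig : ∀ u, ∫ v, F v ∂(kcomp (kpow Pstar k) (kpow P k) u) = lam * F u) :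
    ∀ u : U, ∀ y : Y,
      ∫ p, F p.1 ∂(kcomp (kpow Pbarstar k) (kpow Pbar k) (u, y)) = lam * F u := by
  subst hPbar hPbarstar
  intro u y
  have hpair := measurable_pairQ hQm hQ
  have hPbarm : Measurable (fun p : U × Y =>
      (P p.1).bind (fun u' => (Q u').map (fun y' => (u', y')))) :=
    (Measure.measurable_bind' hpair).comp (hPm.comp measurable_fst)
  -- marginal identity for the composed measure
  have hmarg : (kcomp (kpow (fun p : U × Y =>
        (Pstar p.1).bind (fun u' => (Q u').map (fun y' => (u', y')))) k)
      (kpow (fun p : U × Y =>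
        (P p.1).bind (fun u' => (Q u').map (fun y' => (u', y')))) k) (u, y)).map Prod.fst
      = kcomp (kpow Pstar k) (kpow P k) u := by
    show ((kpow _ k (u, y)).bind (kpow _ k)).map Prod.fst = (kpow Pstar k u).bind (kpow P k)
    rw [myMap_bind _ (measurable_kpow hPbarm k) measurable_fst]
    have h1 : (fun p : U × Y => (kpow (fun p : U × Y =>
          (P p.1).bind (fun u' => (Q u').map (fun y' => (u', y')))) k p).map Prod.fst)
        = (kpow P k) ∘ Prod.fst := by
      funext p
      obtain ⟨a, b⟩ := p
      exact kpow_lift_map_fst hPm hP hQm hQ k a b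
    rw [h1, ← myBind_map _ measurable_fst (measurable_kpow hPm k),
      kpow_lift_map_fst hPstarm hPstar hQm hQ k u y]
  rw [← heig u, ← hmarg, integral_map measurable_fst.aemeasurable hFm.aestronglyMeasurable]
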